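/- Let Y ⊂ ℝ² be the union of the lower unit half-circle {x²+y²=1, y≤0}, the segment [−1,1]×{0}, and the vertical segments {−1+2/n}×[0,1/n] for n ≥ 1. Then every homeomorphism f of Y maps each constituent arc of the natural arc decomposition of Y to itself and fixes the endpoints of these arcs. -/

import Mathlib

open Set Filter Topology

/-- The lower half of the unit circle. -/
def arcC : Set (ℝ × ℝ) := {p : ℝ × ℝ | p.1 ^ 2 + p.2 ^ 2 = 1 ∧ p.2 ≤ 0}

/-- The vertical segment `{-1 + 2/(n+1)} × [0, 1/(n+1)]` (for `n ≥ 0`, i.e. the paper's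
segments indexed by `n ≥ 1`). -/
def arcV (n : ℕ) : Set (ℝ × ℝ) :=
  {p : ℝ × ℝ | p.1 = -1 + 2 / ((n : ℝ) + 1) ∧ p.2 ∈ Set.Icc (0 : ℝ) (1 / ((n : ℝ) + 1))}

/-- The horizontal arc between consecutive branch points. -/
def arcH (n : ℕ) : Set (ℝ × ℝ) :=
  {p : ℝ × ℝ | p.1 ∈ Set.Icc (-1 + 2 / ((n : ℝ) + 2)) (-1 + 2 / ((n : ℝ) + 1)) ∧ p.2 = 0}

/-- The plane continuum `Y`: lower half unit circle, horizontal segment `[-1,1] × {0}` and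
vertical segments `{-1 + 2/n} × [0, 1/n]`, `n ≥ 1`. -/
def Y : Set (ℝ × ℝ) :=
  arcC ∪ {p : ℝ × ℝ | p.1 ∈ Set.Icc (-1 : ℝ) 1 ∧ p.2 = 0} ∪ ⋃ n : ℕ, arcV n

/-- The natural decomposition of `Y` into arcs: the half circle, the vertical segments and
the horizontal arcs between consecutive branch points. -/
def arcs : ℕ → Set (ℝ × ℝ) := fun n =>
  if n = 0 then arcC else if n % 2 = 1 then arcV (n / 2) else arcH (n / 2 - 1)

namespace Stmt13

noncomputable section

/-! ### Basic real arithmetic about the combinatorial data -/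

def cc (n : ℕ) : ℝ := -1 + 2 / ((n : ℝ) + 1)
def hh (n : ℕ) : ℝ := 1 / ((n : ℝ) + 1)
def pp : ℝ × ℝ := (-1, 0)
def bpt (n : ℕ) : ℝ × ℝ := (cc n, 0)
def ep (n : ℕ) : ℝ × ℝ := (cc n, hh n)
def horiz : Set (ℝ × ℝ) := {p : ℝ × ℝ | p.1 ∈ Set.Icc (-1 : ℝ) 1 ∧ p.2 = 0}
def segM (n : ℕ) : Set (ℝ × ℝ) := {p : ℝ × ℝ | p.1 = cc n ∧ p.2 ∈ Set.Ico 0 (hh n)}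

lemma npos (n : ℕ) : (0:ℝ) < (n : ℝ) + 1 := by positivity

lemma hh_pos (n : ℕ) : 0 < hh n := by unfold hh; positivity

lemma cc_def (n : ℕ) : cc n = -1 + 2 * hh n := by unfold cc hh; ring

lemma hh_le_one (n : ℕ) : hh n ≤ 1 := by
  unfold hh
  rw [div_le_one (npos n)]
  have : (0:ℝ) ≤ (n:ℝ) := Nat.cast_nonneg n
  linarith

lemma neg_one_lt_cc (n : ℕ) : -1 < cc n := by
  have := hh_pos n; rw [cc_def]; linarith

lemma cc_le_one (n : ℕ) : cc n ≤ 1 := by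
  have := hh_le_one n; rw [cc_def]; linarith

lemma cc_zero : cc 0 = 1 := by norm_num [cc]

lemma hh_anti : StrictAnti hh := by
  intro m n h
  unfold hh
  apply div_lt_div_of_pos_left one_pos (npos m)
  have : (m:ℝ) < (n:ℝ) := by exact_mod_cast h
  linarith

lemma cc_anti : StrictAnti cc := by
  intro m n h
  have := hh_anti h
  rw [cc_def, cc_def]; linarith

lemma cc_inj {m n : ℕ} (h : cc m = cc n) : m = n := cc_anti.injective h

lemma hh_lt_of_lt {m n : ℕ} (h : m < n) : hh n < hh m := hh_anti h

def gap (n : ℕ) : ℝ := 2 / (((n:ℝ) + 1) * ((n:ℝ) + 2))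

lemma gap_pos (n : ℕ) : 0 < gap n := by unfold gap; positivity

lemma gap_le_of_lt {n m : ℕ} (h : n < m) : gap n ≤ cc n - cc m := by
  have hm : ((n:ℝ)) + 2 ≤ (m:ℝ) + 1 := by
    have : (n:ℝ) + 1 ≤ (m:ℝ) := by exact_mod_cast h
    linarith
  have h1 : 2 / ((m:ℝ) + 1) ≤ 2 / ((n:ℝ) + 2) := by
    apply div_le_div_of_nonneg_left (by norm_num) (by positivity) hm
  have h2 : 2 / ((n:ℝ)+1) - 2 / ((n:ℝ)+2) = gap n := by
    unfold gap; field_simp; ring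
  unfold cc
  linarith

lemma gap_anti {m n : ℕ} (h : m ≤ n) : gap n ≤ gap m := by
  unfold gap
  apply div_le_div_of_nonneg_left (by norm_num) (by positivity)
  have : (m:ℝ) ≤ (n:ℝ) := by exact_mod_cast h
  nlinarith

lemma cc_gap {m n : ℕ} (h : m ≠ n) : gap n ≤ |cc m - cc n| := by
  rcases lt_or_gt_of_ne h with h' | h'
  · have h1 := gap_le_of_lt h'
    have h2 := gap_anti h'.le
    have h3 := gap_pos m
    rw [abs_of_nonneg (by linarith)]
    linarith
  · have h1 := gap_le_of_lt h'
    have h3 := gap_pos n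
    rw [abs_of_nonpos (by linarith)]
    linarith

lemma seg_height (n : ℕ) : hh n = (cc n + 1) / 2 := by rw [cc_def]; ring


/-! ### Membership and structure of `Y` -/

lemma dist1 (p q : ℝ × ℝ) : |p.1 - q.1| ≤ dist p q := by
  rw [Prod.dist_eq, Real.dist_eq]; exact le_max_left _ _

lemma dist2 (p q : ℝ × ℝ) : |p.2 - q.2| ≤ dist p q := by
  rw [Prod.dist_eq, Real.dist_eq]; exact le_max_right _ _

lemma mem_Y_iff {p : ℝ × ℝ} : p ∈ Y ↔ p ∈ arcC ∨ p ∈ horiz ∨ ∃ n, p ∈ arcV n := by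
  unfold Y horiz
  simp [Set.mem_union, Set.mem_iUnion]
  tauto

lemma arcV_eq (n : ℕ) : arcV n = {p : ℝ × ℝ | p.1 = cc n ∧ p.2 ∈ Set.Icc 0 (hh n)} := rfl

lemma arcC_subset_Y : arcC ⊆ Y := fun p hp => mem_Y_iff.2 (Or.inl hp)
lemma horiz_subset_Y : horiz ⊆ Y := fun p hp => mem_Y_iff.2 (Or.inr (Or.inl hp))
lemma arcV_subset_Y (n : ℕ) : arcV n ⊆ Y := fun p hp => mem_Y_iff.2 (Or.inr (Or.inr ⟨n, hp⟩))

lemma pp_mem_horiz : pp ∈ horiz := by constructor <;> simp [pp]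
lemma pp_mem_arcC : pp ∈ arcC := by constructor <;> simp [pp]
lemma pp_mem_Y : pp ∈ Y := horiz_subset_Y pp_mem_horiz
lemma one_zero_mem_horiz : ((1:ℝ), (0:ℝ)) ∈ horiz := by constructor <;> simp
lemma bpt_mem_horiz (n : ℕ) : bpt n ∈ horiz := by
  refine ⟨⟨(neg_one_lt_cc n).le, cc_le_one n⟩, rfl⟩
lemma bpt_mem_arcV (n : ℕ) : bpt n ∈ arcV n := by
  rw [arcV_eq]; exact ⟨rfl, le_refl _, (hh_pos n).le⟩
lemma ep_mem_arcV (n : ℕ) : ep n ∈ arcV n := by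
  rw [arcV_eq]; exact ⟨rfl, (hh_pos n).le, le_refl _⟩
lemma bpt_mem_segM (n : ℕ) : bpt n ∈ segM n := ⟨rfl, le_refl _, hh_pos n⟩
lemma segM_subset_arcV (n : ℕ) : segM n ⊆ arcV n := by
  intro p hp; rw [arcV_eq]; exact ⟨hp.1, hp.2.1, hp.2.2.le⟩
lemma bpt_mem_Y (n : ℕ) : bpt n ∈ Y := horiz_subset_Y (bpt_mem_horiz n)
lemma ep_mem_Y (n : ℕ) : ep n ∈ Y := arcV_subset_Y n (ep_mem_arcV n)

lemma arcC_y_nonpos {p : ℝ × ℝ} (h : p ∈ arcC) : p.2 ≤ 0 := h.2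
lemma horiz_y_zero {p : ℝ × ℝ} (h : p ∈ horiz) : p.2 = 0 := h.2
lemma arcV_y_nonneg {n : ℕ} {p : ℝ × ℝ} (h : p ∈ arcV n) : 0 ≤ p.2 := h.2.1

lemma Y_pos_y {p : ℝ × ℝ} (hp : p ∈ Y) (h2 : 0 < p.2) : ∃ n, p ∈ arcV n := by
  rcases mem_Y_iff.1 hp with h | h | h
  · linarith [arcC_y_nonpos h]
  · linarith [horiz_y_zero h]
  · exact h

lemma Y_neg_y {p : ℝ × ℝ} (hp : p ∈ Y) (h2 : p.2 < 0) : p ∈ arcC := by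
  rcases mem_Y_iff.1 hp with h | h | h
  · exact h
  · linarith [horiz_y_zero h]
  · rcases h with ⟨n, hn⟩; linarith [arcV_y_nonneg hn]

lemma arcC_eq_y {p : ℝ × ℝ} (h : p ∈ arcC) (h0 : p.2 = 0) : p.1 = 1 ∨ p.1 = -1 := by
  have h1 := h.1
  rw [h0] at h1
  have h2 : (p.1 - 1) * (p.1 + 1) = 0 := by nlinarith
  rcases mul_eq_zero.1 h2 with h3 | h3
  · exact Or.inl (by linarith)
  · exact Or.inr (by linarith)

/-! ### The parametrization of the half-circle -/

def g (t : ℝ) : ℝ × ℝ := (t, -Real.sqrt (1 - t ^ 2))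

lemma continuous_g : Continuous g := by
  apply Continuous.prodMk continuous_id
  exact (Real.continuous_sqrt.comp (by continuity)).neg

lemma g_fst (t : ℝ) : (g t).1 = t := rfl

lemma g_mem_arcC {t : ℝ} (h : t ∈ Set.Icc (-1:ℝ) 1) : g t ∈ arcC := by
  have h1 : (0:ℝ) ≤ 1 - t ^ 2 := by nlinarith [h.1, h.2]
  constructor
  · show t ^ 2 + (-Real.sqrt (1 - t ^ 2)) ^ 2 = 1
    rw [neg_pow, Real.sq_sqrt h1]; ring
  · show -Real.sqrt (1 - t ^ 2) ≤ 0
    simp [Real.sqrt_nonneg]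

lemma mem_arcC_eq_g {p : ℝ × ℝ} (h : p ∈ arcC) : p = g p.1 := by
  have h1 : p.2 ^ 2 = 1 - p.1 ^ 2 := by have := h.1; linarith
  have h2 : -Real.sqrt (1 - p.1 ^ 2) = p.2 := by
    rw [← h1, Real.sqrt_sq_eq_abs, abs_of_nonpos h.2]; ring
  ext
  · rfl
  · exact h2.symm

lemma arcC_fst_mem {p : ℝ × ℝ} (h : p ∈ arcC) : p.1 ∈ Set.Icc (-1:ℝ) 1 := by
  have h1 : p.1 ^ 2 ≤ 1 := by nlinarith [sq_nonneg p.2, h.1]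
  constructor <;> nlinarith

lemma arcC_eq_image : arcC = g '' Set.Icc (-1:ℝ) 1 := by
  apply Set.Subset.antisymm
  · intro p hp
    exact ⟨p.1, arcC_fst_mem hp, (mem_arcC_eq_g hp).symm⟩
  · rintro p ⟨t, ht, rfl⟩
    exact g_mem_arcC ht

lemma g_neg_one : g (-1) = pp := by
  unfold g pp; norm_num

lemma g_one : g 1 = ((1:ℝ), (0:ℝ)) := by
  unfold g; norm_num

lemma g_snd_neg {t : ℝ} (h1 : -1 < t) (h2 : t < 1) : (g t).2 < 0 := by
  show -Real.sqrt (1 - t ^ 2) < 0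
  have : (0:ℝ) < 1 - t ^ 2 := by nlinarith
  simp [Real.sqrt_pos.2 this]

/-! ### Limits -/

lemma tendsto_hh : Filter.Tendsto hh Filter.atTop (𝓝 0) :=
  tendsto_one_div_add_atTop_nhds_zero_nat

lemma tendsto_cc : Filter.Tendsto cc Filter.atTop (𝓝 (-1)) := by
  have : Filter.Tendsto (fun n => -1 + 2 * hh n) Filter.atTop (𝓝 (-1 + 2 * 0)) :=
    (tendsto_const_nhds.add (tendsto_hh.const_mul 2))
  simpa [← cc_def] using this

lemma tendsto_bpt : Filter.Tendsto bpt Filter.atTop (𝓝 pp) := by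
  unfold bpt pp
  exact tendsto_cc.prodMk_nhds (by simpa using tendsto_const_nhds)

lemma tendsto_ep : Filter.Tendsto ep Filter.atTop (𝓝 pp) := by
  unfold ep pp
  exact tendsto_cc.prodMk_nhds (by simpa using tendsto_hh)

/-! ### Closedness of `Y` and of the union of segments -/

def Kp : Set (ℝ × ℝ) := {pp} ∪ ⋃ n, arcV n

lemma arcV_closed (n : ℕ) : IsClosed (arcV n) := by
  rw [arcV_eq]
  have : {p : ℝ × ℝ | p.1 = cc n ∧ p.2 ∈ Set.Icc 0 (hh n)} =
      ({cc n} : Set ℝ) ×ˢ (Set.Icc 0 (hh n)) := by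
    ext ⟨a, b⟩; simp [Set.mem_prod]
  rw [this]
  exact (isClosed_singleton).prod isClosed_Icc

lemma arcC_closed : IsClosed arcC := by
  have : arcC = {p : ℝ × ℝ | p.1 ^ 2 + p.2 ^ 2 = 1} ∩ {p | p.2 ≤ 0} := rfl
  rw [this]
  exact ((isClosed_eq (by continuity) continuous_const)).inter
    (isClosed_le (by continuity) continuous_const)

lemma horiz_closed : IsClosed horiz := by
  have : horiz = (Set.Icc (-1:ℝ) 1) ×ˢ ({(0:ℝ)} : Set ℝ) := by
    ext ⟨a, b⟩
    simp only [horiz, Set.mem_setOf_eq, Set.mem_prod, Set.mem_Icc, Set.mem_singleton_iff]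
  rw [this]
  exact isClosed_Icc.prod isClosed_singleton

def wedge : Set (ℝ × ℝ) := {q : ℝ × ℝ | 0 ≤ q.2 ∧ q.2 ≤ (q.1 + 1) / 2}

lemma wedge_closed : IsClosed wedge := by
  unfold wedge
  have : {q : ℝ × ℝ | 0 ≤ q.2 ∧ q.2 ≤ (q.1 + 1) / 2} =
      {q : ℝ × ℝ | 0 ≤ q.2} ∩ {q : ℝ × ℝ | q.2 ≤ (q.1 + 1) / 2} := rfl
  rw [this]
  exact (isClosed_le continuous_const continuous_snd).inter
    (isClosed_le continuous_snd (by continuity))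

lemma arcV_subset_wedge (n : ℕ) : arcV n ⊆ wedge := by
  intro p hp
  rw [arcV_eq] at hp
  obtain ⟨h1, h2, h3⟩ := hp
  refine ⟨h2, ?_⟩
  rw [h1]
  rw [seg_height] at h3
  exact h3

lemma Kp_subset_wedge : Kp ⊆ wedge := by
  rintro p (h | h)
  · rw [Set.mem_singleton_iff] at h; rw [h]; exact ⟨le_refl _, by norm_num [pp]⟩
  · rcases Set.mem_iUnion.1 h with ⟨n, hn⟩; exact arcV_subset_wedge n hn

lemma Kp_closed : IsClosed Kp := by
  rw [← isOpen_compl_iff, Metric.isOpen_iff]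
  intro p hp
  by_cases hw : p ∈ wedge
  · obtain ⟨h2, h3⟩ := hw
    have h1 : -1 ≤ p.1 := by linarith
    rcases eq_or_lt_of_le h1 with heq | hlt
    · exfalso
      apply hp
      have hp2 : p.2 = 0 := by rw [← heq] at h3; linarith
      have : p = pp := by
        ext
        · exact heq.symm
        · exact hp2
      rw [this]; exact Or.inl rfl
    · set t := p.1 with ht
      set m := (t - 1) / 2 with hm
      have hm1 : -1 < m := by rw [hm]; linarith
      have hm2 : m < t := by rw [hm]; linarith
      have hev : ∀ᶠ n in Filter.atTop, cc n < m :=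
        tendsto_cc.eventually_lt_const hm1
      obtain ⟨N, hN⟩ := Filter.eventually_atTop.1 hev
      set C : Set (ℝ × ℝ) := ⋃ n ∈ Finset.range (N + 1), arcV n with hC
      have hCc : IsClosed C := by
        apply Set.Finite.isClosed_biUnion (Finset.finite_toSet _)
        intro i _
        exact arcV_closed i
      have hpC : p ∉ C := by
        intro hmem
        apply hp
        rcases Set.mem_iUnion₂.1 hmem with ⟨n, _, hn⟩
        exact Or.inr (Set.mem_iUnion.2 ⟨n, hn⟩)
      obtain ⟨ε₁, hε₁, hball₁⟩ := Metric.isOpen_iff.1 hCc.isOpen_compl p hpC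
      refine ⟨min ε₁ (t - m), lt_min hε₁ (by linarith), ?_⟩
      intro q hq
      rw [Metric.mem_ball] at hq
      intro hqK
      rcases hqK with h | h
      · rw [Set.mem_singleton_iff] at h
        have := dist1 q p
        rw [h] at this hq
        have h5 : |pp.1 - p.1| = t + 1 := by
          have he : pp.1 - p.1 = -(t + 1) := by simp [pp]; ring
          rw [he, abs_neg, abs_of_nonneg (by linarith)]
        have h6 : dist (pp) p < t - m := lt_of_lt_of_le hq (min_le_right _ _)
        rw [h5] at this
        linarith
      · rcases Set.mem_iUnion.1 h with ⟨n, hn⟩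
        by_cases hn2 : n ≤ N
        · have : q ∈ C := Set.mem_iUnion₂.2 ⟨n, Finset.mem_range.2 (by omega), hn⟩
          have hq2 : q ∈ Metric.ball p ε₁ :=
            Metric.mem_ball.2 (lt_of_lt_of_le hq (min_le_left _ _))
          exact hball₁ hq2 this
        · push_neg at hn2
          have hcc : cc n < m := by
            rcases eq_or_lt_of_le (Nat.succ_le_of_lt hn2) with h' | h'
            · have : cc n ≤ cc N := cc_anti.antitone (by omega)
              exact lt_of_le_of_lt this (hN N (le_refl N))
            · exact hN n (by omega)
          rw [arcV_eq] at hn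
          have h7 := dist1 q p
          have h8 : t - m ≤ |q.1 - p.1| := by
            rw [abs_of_nonpos (by rw [hn.1]; linarith)]
            rw [hn.1]
            linarith
          have h6 : dist q p < t - m := lt_of_lt_of_le hq (min_le_right _ _)
          linarith
  · obtain ⟨ε, hε, hball⟩ := Metric.isOpen_iff.1 wedge_closed.isOpen_compl p hw
    exact ⟨ε, hε, fun q hq hqK => hball hq (Kp_subset_wedge hqK)⟩

lemma Y_eq_union_Kp : Y = arcC ∪ horiz ∪ Kp := by
  unfold Kp
  have h1 : pp ∈ horiz := pp_mem_horiz
  apply Set.Subset.antisymm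
  · intro p hp
    rcases mem_Y_iff.1 hp with h | h | h
    · exact Or.inl (Or.inl h)
    · exact Or.inl (Or.inr h)
    · exact Or.inr (Or.inr (Set.mem_iUnion.2 h))
  · rintro p ((h | h) | (h | h))
    · exact arcC_subset_Y h
    · exact horiz_subset_Y h
    · rw [Set.mem_singleton_iff] at h; rw [h]; exact pp_mem_Y
    · rcases Set.mem_iUnion.1 h with ⟨n, hn⟩; exact arcV_subset_Y n hn

lemma Y_closed : IsClosed Y := by
  rw [Y_eq_union_Kp]
  exact (arcC_closed.union horiz_closed).union Kp_closed


/-! ### Connectedness building blocks -/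

lemma g_inj : Function.Injective g := fun a b h => congrArg Prod.fst h

def hI (t : ℝ) : ℝ × ℝ := (t, 0)

lemma hI_inj : Function.Injective hI := fun a b h => congrArg Prod.fst h

lemma continuous_hI : Continuous hI := continuous_id.prodMk continuous_const

def vI (n : ℕ) (y : ℝ) : ℝ × ℝ := (cc n, y)

lemma continuous_vI (n : ℕ) : Continuous (vI n) := continuous_const.prodMk continuous_id

lemma horiz_eq_image : horiz = hI '' Set.Icc (-1) 1 := by
  ext p
  constructor
  · rintro ⟨h1, h2⟩
    exact ⟨p.1, h1, by simp [hI, Prod.ext_iff, h2]⟩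
  · rintro ⟨t, ht, rfl⟩
    exact ⟨ht, rfl⟩

lemma arcV_eq_image (n : ℕ) : arcV n = vI n '' Set.Icc 0 (hh n) := by
  rw [arcV_eq]
  ext p
  constructor
  · rintro ⟨h1, h2⟩
    exact ⟨p.2, h2, by simp [vI, Prod.ext_iff, h1]⟩
  · rintro ⟨y, hy, rfl⟩
    exact ⟨rfl, hy⟩

lemma segM_eq_image (n : ℕ) : segM n = vI n '' Set.Ico 0 (hh n) := by
  ext p
  constructor
  · rintro ⟨h1, h2⟩
    exact ⟨p.2, h2, by simp [vI, Prod.ext_iff, h1]⟩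
  · rintro ⟨y, hy, rfl⟩
    exact ⟨rfl, hy⟩

lemma preconn_image_g {s : Set ℝ} (hs : IsPreconnected s) : IsPreconnected (g '' s) :=
  hs.image g continuous_g.continuousOn

lemma preconn_image_hI {s : Set ℝ} (hs : IsPreconnected s) : IsPreconnected (hI '' s) :=
  hs.image hI continuous_hI.continuousOn

lemma preconn_image_vI {n : ℕ} {s : Set ℝ} (hs : IsPreconnected s) :
    IsPreconnected (vI n '' s) :=
  hs.image (vI n) (continuous_vI n).continuousOn

lemma arcC_preconn : IsPreconnected arcC := by
  rw [arcC_eq_image]; exact preconn_image_g isPreconnected_Icc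

lemma horiz_preconn : IsPreconnected horiz := by
  rw [horiz_eq_image]; exact preconn_image_hI isPreconnected_Icc

lemma arcV_preconn (n : ℕ) : IsPreconnected (arcV n) := by
  rw [arcV_eq_image]; exact preconn_image_vI isPreconnected_Icc

lemma segM_preconn (n : ℕ) : IsPreconnected (segM n) := by
  rw [segM_eq_image]; exact preconn_image_vI isPreconnected_Ico

lemma Icc_diff_singleton {a b c : ℝ} (h1 : a ≤ c) (h2 : c ≤ b) :
    Set.Icc a b \ {c} = Set.Ico a c ∪ Set.Ioc c b := by
  ext t
  simp only [Set.mem_diff, Set.mem_Icc, Set.mem_singleton_iff, Set.mem_union, Set.mem_Ico,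
    Set.mem_Ioc]
  constructor
  · rintro ⟨⟨ht1, ht2⟩, ht3⟩
    rcases lt_or_gt_of_ne ht3 with h | h
    · exact Or.inl ⟨ht1, h⟩
    · exact Or.inr ⟨h, ht2⟩
  · rintro (⟨ht1, ht2⟩ | ⟨ht1, ht2⟩)
    · exact ⟨⟨ht1, le_trans ht2.le h2⟩, ne_of_lt ht2⟩
    · exact ⟨⟨le_trans h1 ht1.le, ht2⟩, ne_of_gt ht1⟩

/-! ### The circle `arcC ∪ horiz` minus a point is preconnected -/

lemma one_zero_mem_arcC : ((1:ℝ), (0:ℝ)) ∈ arcC := ⟨by norm_num, le_refl 0⟩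

lemma hI_one : hI 1 = ((1:ℝ), (0:ℝ)) := rfl

lemma hI_neg_one : hI (-1) = pp := rfl

lemma arcC_diff_g {a : ℝ} (ha : a ∈ Set.Icc (-1:ℝ) 1) :
    arcC \ {g a} = g '' Set.Ico (-1) a ∪ g '' Set.Ioc a 1 := by
  rw [arcC_eq_image, ← Set.image_singleton, ← Set.image_diff g_inj,
      Icc_diff_singleton ha.1 ha.2, Set.image_union]

lemma horiz_diff_hI {a : ℝ} (ha : a ∈ Set.Icc (-1:ℝ) 1) :
    horiz \ {hI a} = hI '' Set.Ico (-1) a ∪ hI '' Set.Ioc a 1 := by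
  rw [horiz_eq_image, ← Set.image_singleton, ← Set.image_diff hI_inj,
      Icc_diff_singleton ha.1 ha.2, Set.image_union]

lemma arcC_diff_pp : arcC \ {pp} = g '' Set.Ioc (-1) 1 := by
  rw [← g_neg_one, arcC_diff_g ⟨le_refl _, by norm_num⟩, Set.Ico_self]
  simp

lemma arcC_diff_one : arcC \ {((1:ℝ), (0:ℝ))} = g '' Set.Ico (-1) 1 := by
  rw [← g_one, arcC_diff_g ⟨by norm_num, le_refl _⟩, Set.Ioc_self]
  simp

lemma arcC_fst_lt {p : ℝ × ℝ} (h : p ∈ arcC) (hy : p.2 < 0) : -1 < p.1 ∧ p.1 < 1 := by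
  have h1 : p.1 ^ 2 + p.2 ^ 2 = 1 := h.1
  have h2 : 0 < p.2 ^ 2 := lt_of_le_of_ne (sq_nonneg _) (Ne.symm (pow_ne_zero 2 hy.ne))
  constructor <;> nlinarith [sq_nonneg (p.1 - 1), sq_nonneg (p.1 + 1)]

lemma hIa_not_mem_arcC {a : ℝ} (h1 : -1 < a) (h2 : a < 1) : hI a ∉ arcC := by
  intro h
  rcases arcC_eq_y h rfl with h3 | h3
  · exact absurd h3 (ne_of_lt h2)
  · exact absurd h3 (ne_of_gt h1)

lemma core_preconn (x : ℝ × ℝ) : IsPreconnected ((arcC ∪ horiz) \ {x}) := by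
  by_cases hx : x ∈ arcC ∪ horiz
  case neg =>
    rw [Set.diff_singleton_eq_self hx]
    exact IsPreconnected.union pp pp_mem_arcC pp_mem_horiz arcC_preconn horiz_preconn
  case pos =>
    rw [Set.union_diff_distrib]
    by_cases hy : x.2 < 0
    · have hxC : x ∈ arcC := by
        rcases hx with h | h
        · exact h
        · exact absurd (horiz_y_zero h) (ne_of_lt hy)
      have hxH : x ∉ horiz := fun h => absurd (horiz_y_zero h) (ne_of_lt hy)
      obtain ⟨ha1, ha2⟩ := arcC_fst_lt hxC hy
      rw [Set.diff_singleton_eq_self hxH]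
      have hgx : x = g x.1 := mem_arcC_eq_g hxC
      rw [hgx, arcC_diff_g ⟨ha1.le, ha2.le⟩]
      have hP1 : IsPreconnected (g '' Set.Ico (-1) x.1 ∪ horiz) :=
        IsPreconnected.union pp ⟨-1, ⟨le_refl _, ha1⟩, g_neg_one⟩ pp_mem_horiz
          (preconn_image_g isPreconnected_Ico) horiz_preconn
      have hP2 : IsPreconnected (g '' Set.Ioc x.1 1 ∪ horiz) :=
        IsPreconnected.union ((1:ℝ), (0:ℝ)) ⟨1, ⟨ha2, le_refl _⟩, g_one⟩ one_zero_mem_horiz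
          (preconn_image_g isPreconnected_Ioc) horiz_preconn
      have hU := IsPreconnected.union pp (Or.inr pp_mem_horiz) (Or.inr pp_mem_horiz) hP1 hP2
      convert hU using 1
      ext p
      simp only [Set.mem_union]
      tauto
    · push_neg at hy
      have hxH : x ∈ horiz := by
        rcases hx with h | h
        · have h0 : x.2 = 0 := le_antisymm (arcC_y_nonpos h) hy
          rcases arcC_eq_y h h0 with h1 | h1
          · exact ⟨by rw [h1]; exact ⟨by norm_num, le_refl _⟩, h0⟩
          · exact ⟨by rw [h1]; exact ⟨le_refl _, by norm_num⟩, h0⟩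
        · exact h
      have hxa : x = hI x.1 := Prod.ext_iff.mpr ⟨rfl, horiz_y_zero hxH⟩
      obtain ⟨⟨ha1, ha2⟩, _⟩ := hxH
      rcases eq_or_lt_of_le ha1 with he1 | he1
      · -- x = pp
        have hxp : x = pp := by rw [hxa, ← he1, hI_neg_one]
        rw [hxp, arcC_diff_pp]
        have : horiz \ {pp} = hI '' Set.Ioc (-1) 1 := by
          rw [← hI_neg_one, horiz_diff_hI ⟨le_refl _, by norm_num⟩, Set.Ico_self]
          simp
        rw [this]
        exact IsPreconnected.union ((1:ℝ), (0:ℝ)) ⟨1, ⟨by norm_num, le_refl _⟩, g_one⟩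
          ⟨1, ⟨by norm_num, le_refl _⟩, hI_one⟩
          (preconn_image_g isPreconnected_Ioc) (preconn_image_hI isPreconnected_Ioc)
      rcases eq_or_lt_of_le ha2 with he2 | he2
      · -- x = (1, 0)
        have hxp : x = ((1:ℝ), (0:ℝ)) := by rw [hxa, he2, hI_one]
        rw [hxp, arcC_diff_one]
        have : horiz \ {((1:ℝ), (0:ℝ))} = hI '' Set.Ico (-1) 1 := by
          rw [← hI_one, horiz_diff_hI ⟨by norm_num, le_refl _⟩, Set.Ioc_self]
          simp
        rw [this]
        exact IsPreconnected.union pp ⟨-1, ⟨le_refl _, by norm_num⟩, g_neg_one⟩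
          ⟨-1, ⟨le_refl _, by norm_num⟩, hI_neg_one⟩
          (preconn_image_g isPreconnected_Ico) (preconn_image_hI isPreconnected_Ico)
      · -- interior point of horiz
        have hnotC : x ∉ arcC := by rw [hxa]; exact hIa_not_mem_arcC he1 he2
        rw [Set.diff_singleton_eq_self hnotC]
        rw [hxa, horiz_diff_hI ⟨ha1, ha2⟩]
        have hP1 : IsPreconnected (arcC ∪ hI '' Set.Ico (-1) x.1) :=
          IsPreconnected.union pp pp_mem_arcC ⟨-1, ⟨le_refl _, he1⟩, hI_neg_one⟩
            arcC_preconn (preconn_image_hI isPreconnected_Ico)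
        have hP2 : IsPreconnected (arcC ∪ hI '' Set.Ioc x.1 1) :=
          IsPreconnected.union ((1:ℝ), (0:ℝ)) one_zero_mem_arcC ⟨1, ⟨he2, le_refl _⟩, hI_one⟩
            arcC_preconn (preconn_image_hI isPreconnected_Ioc)
        have hU := IsPreconnected.union pp (Or.inl pp_mem_arcC) (Or.inl pp_mem_arcC) hP1 hP2
        convert hU using 1
        ext p
        simp only [Set.mem_union]
        tauto

/-! ### Cut points of `Y` -/

lemma bpt_zero : bpt 0 = ((1:ℝ), (0:ℝ)) := by rw [bpt, cc_zero]

lemma Y_eq_parts : Y = (arcC ∪ horiz) ∪ ⋃ n, arcV n := by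
  ext p
  rw [mem_Y_iff]
  simp only [Set.mem_union, Set.mem_iUnion]
  tauto

lemma arcV_not_segM {n : ℕ} {x : ℝ × ℝ} (h1 : x ∈ arcV n) (h2 : x ∉ segM n) : x = ep n := by
  rw [arcV_eq] at h1
  obtain ⟨ha, hb, hc⟩ := h1
  rcases eq_or_lt_of_le hc with h | h
  · exact Prod.ext_iff.mpr ⟨ha, h⟩
  · exact absurd ⟨ha, hb, h⟩ h2

lemma arcV_diff_ep (n : ℕ) : arcV n \ {ep n} = segM n := by
  have h1 : ep n = vI n (hh n) := rfl
  rw [arcV_eq_image, segM_eq_image, h1, ← Set.image_singleton,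
    ← Set.image_diff (fun a b h => congrArg Prod.snd h : Function.Injective (vI n)),
    Icc_diff_singleton (hh_pos n).le (le_refl _), Set.Ioc_self, Set.union_empty]

lemma Y_diff_preconn {x : ℝ × ℝ} (hx : ∀ n, x ∉ segM n) : IsPreconnected (Y \ {x}) := by
  have h10 : ((1:ℝ), (0:ℝ)) ≠ x := by
    intro h
    exact hx 0 (by rw [← h, ← bpt_zero]; exact bpt_mem_segM 0)
  set T : ℕ → Set (ℝ × ℝ) := fun n => ((arcC ∪ horiz) \ {x}) ∪ (arcV n \ {x}) with hT
  have hTpre : ∀ n, IsPreconnected (T n) := by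
    intro n
    have hbx : bpt n ≠ x := by
      intro h; exact hx n (h ▸ bpt_mem_segM n)
    have hseg : IsPreconnected (arcV n \ {x}) := by
      by_cases hxV : x ∈ arcV n
      · have : x = ep n := arcV_not_segM hxV (hx n)
        rw [this, arcV_diff_ep]
        exact segM_preconn n
      · rw [Set.diff_singleton_eq_self hxV]
        exact arcV_preconn n
    exact IsPreconnected.union (bpt n) ⟨Or.inr (bpt_mem_horiz n), hbx⟩
      ⟨bpt_mem_arcV n, hbx⟩ (core_preconn x) hseg
  have hcover : Y \ {x} = ⋃ n, T n := by
    rw [Y_eq_parts, Set.union_diff_distrib, Set.iUnion_diff]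
    ext p
    simp only [hT, Set.mem_union, Set.mem_iUnion]
    constructor
    · rintro (h | ⟨n, h⟩)
      · exact ⟨0, Or.inl h⟩
      · exact ⟨n, Or.inr h⟩
    · rintro ⟨n, h | h⟩
      · exact Or.inl h
      · exact Or.inr ⟨n, h⟩
  rw [hcover]
  apply isPreconnected_iUnion
  · exact ⟨((1:ℝ), (0:ℝ)), Set.mem_iInter.2 fun n => Or.inl ⟨Or.inl one_zero_mem_arcC, h10⟩⟩
  · exact hTpre

lemma segM_cut {n : ℕ} {x : ℝ × ℝ} (hx : x ∈ segM n) : ¬ IsPreconnected (Y \ {x}) := by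
  intro hpre
  obtain ⟨hx1, hx2, hx3⟩ := hx
  set U : Set (ℝ × ℝ) := {p | x.2 < p.2 ∧ |p.1 - cc n| < gap n} with hUdef
  set V : Set (ℝ × ℝ) := {p | p.1 ≠ cc n} ∪ {p | p.2 < x.2} with hVdef
  have hUo : IsOpen U := by
    apply IsOpen.inter
    · exact isOpen_lt continuous_const continuous_snd
    · exact isOpen_lt ((continuous_fst.sub continuous_const).abs) continuous_const
  have hVo : IsOpen V := by
    apply IsOpen.union
    · exact isOpen_ne_fun continuous_fst continuous_const
    · exact isOpen_lt continuous_snd continuous_const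
  have hYU : ∀ p, p ∈ Y → p ∈ U → p.1 = cc n ∧ x.2 < p.2 := by
    intro p hpY hpU
    obtain ⟨h1, h2⟩ := hpU
    have hp2 : 0 < p.2 := lt_of_le_of_lt hx2 h1
    obtain ⟨m, hm⟩ := Y_pos_y hpY hp2
    rw [arcV_eq] at hm
    have : m = n := by
      by_contra hmn
      have := cc_gap hmn
      rw [← hm.1] at this
      linarith
    exact ⟨by rw [hm.1, this], h1⟩
  have hcov : Y \ {x} ⊆ U ∪ V := by
    rintro p ⟨hpY, hpx⟩
    by_cases h1 : p.1 = cc n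
    · rcases lt_trichotomy p.2 x.2 with h2 | h2 | h2
      · exact Or.inr (Or.inr h2)
      · exfalso
        exact hpx (Prod.ext_iff.mpr ⟨by rw [h1, hx1], h2⟩)
      · refine Or.inl ⟨h2, ?_⟩
        rw [h1]
        simpa using gap_pos n
    · exact Or.inr (Or.inl h1)
  have hep : ep n ∈ (Y \ {x}) ∩ U := by
    refine ⟨⟨ep_mem_Y n, ?_⟩, hx3, by simpa [ep] using gap_pos n⟩
    intro h
    rw [← h] at hx3
    exact lt_irrefl _ hx3
  have hpp : pp ∈ (Y \ {x}) ∩ V := by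
    have hne : pp.1 ≠ cc n := ne_of_lt (neg_one_lt_cc n)
    refine ⟨⟨pp_mem_Y, ?_⟩, Or.inl hne⟩
    intro h
    rw [← h] at hx1
    exact hne hx1
  obtain ⟨q, ⟨hqY, _⟩, hqU, hqV⟩ := hpre U V hUo hVo hcov ⟨ep n, hep⟩ ⟨pp, hpp⟩
  obtain ⟨hq1, hq2⟩ := hYU q hqY hqU
  rcases hqV with h | h
  · exact h hq1
  · exact absurd hq2 (not_lt.2 h.le)

def CutSet : Set (ℝ × ℝ) := {p | p ∈ Y ∧ ¬ IsPreconnected (Y \ {p})}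

lemma CutSet_eq : CutSet = ⋃ n, segM n := by
  ext p
  constructor
  · rintro ⟨hpY, hp⟩
    by_contra h
    rw [Set.mem_iUnion] at h
    push_neg at h
    exact hp (Y_diff_preconn h)
  · intro h
    rcases Set.mem_iUnion.1 h with ⟨n, hn⟩
    exact ⟨arcV_subset_Y n (segM_subset_arcV n hn), segM_cut hn⟩

/-! ### The endpoint set and branch point set via closures -/

def EP : Set (ℝ × ℝ) := {pp} ∪ Set.range ep

lemma ep_ne_pp (n : ℕ) : ep n ≠ pp := by
  intro h
  have : (ep n).1 = pp.1 := by rw [h]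
  simp only [ep, pp] at this
  exact absurd this (ne_of_gt (neg_one_lt_cc n))

lemma pp_not_mem_segM (m : ℕ) : pp ∉ segM m := by
  intro h
  exact absurd h.1 (ne_of_lt (neg_one_lt_cc m))

lemma ep_not_mem_segM (n m : ℕ) : ep n ∉ segM m := by
  intro h
  by_cases hmn : n = m
  · subst hmn
    exact absurd h.2.2 (lt_irrefl _)
  · have hcc : cc n = cc m := h.1
    have := cc_gap hmn
    rw [hcc] at this
    simp at this
    linarith [gap_pos m]

lemma ep_mem_closure_segM (n : ℕ) : ep n ∈ closure (segM n) := by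
  have hseq : Filter.Tendsto (fun k => vI n (hh n * (1 - hh k))) Filter.atTop (𝓝 (ep n)) := by
    have h1 : Filter.Tendsto (fun k => hh n * (1 - hh k)) Filter.atTop (𝓝 (hh n * (1 - 0))) :=
      (tendsto_const_nhds.sub tendsto_hh).const_mul (hh n)
    have h2 := ((continuous_vI n).tendsto (hh n * (1 - 0))).comp h1
    simpa [ep, vI, mul_comm, Function.comp_def] using h2
  apply mem_closure_of_tendsto hseq
  apply Filter.Eventually.of_forall
  intro k
  rw [segM_eq_image]
  refine ⟨hh n * (1 - hh k), ⟨?_, ?_⟩, rfl⟩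
  · have h1 := hh_le_one k
    have h2 := hh_pos n
    nlinarith
  · have h1 := hh_pos k
    have h2 := hh_pos n
    nlinarith

lemma closure_CutSet : closure CutSet = Kp := by
  apply Set.Subset.antisymm
  · apply closure_minimal
    · rw [CutSet_eq]
      exact Set.iUnion_subset fun n => (segM_subset_arcV n).trans
        (fun p hp => Or.inr (Set.mem_iUnion.2 ⟨n, hp⟩))
    · exact Kp_closed
  · rintro p (h | h)
    · rw [Set.mem_singleton_iff] at h
      subst h
      have : ∀ k, bpt k ∈ CutSet := by
        intro k
        rw [CutSet_eq]
        exact Set.mem_iUnion.2 ⟨k, bpt_mem_segM k⟩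
      exact mem_closure_of_tendsto tendsto_bpt (Filter.Eventually.of_forall this)
    · rcases Set.mem_iUnion.1 h with ⟨n, hn⟩
      rcases lt_or_eq_of_le (hn.2.2 : p.2 ≤ hh n) with h2 | h2
      · apply subset_closure
        rw [CutSet_eq]
        exact Set.mem_iUnion.2 ⟨n, hn.1, hn.2.1, h2⟩
      · have hp : p = ep n := Prod.ext_iff.mpr ⟨hn.1, h2⟩
        rw [hp]
        refine closure_mono ?_ (ep_mem_closure_segM n)
        rw [CutSet_eq]
        exact fun q hq => Set.mem_iUnion.2 ⟨n, hq⟩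

lemma Kp_diff_CutSet : Kp \ CutSet = EP := by
  rw [CutSet_eq]
  ext p
  constructor
  · rintro ⟨hp | hp, hq⟩
    · exact Or.inl hp
    · rcases Set.mem_iUnion.1 hp with ⟨n, hn⟩
      have : p ∉ segM n := fun h => hq (Set.mem_iUnion.2 ⟨n, h⟩)
      exact Or.inr ⟨n, (arcV_not_segM hn this).symm⟩
  · rintro (hp | ⟨n, rfl⟩)
    · rw [Set.mem_singleton_iff] at hp
      subst hp
      refine ⟨Or.inl rfl, ?_⟩
      intro h
      rcases Set.mem_iUnion.1 h with ⟨m, hm⟩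
      exact pp_not_mem_segM m hm
    · refine ⟨Or.inr (Set.mem_iUnion.2 ⟨n, ep_mem_arcV n⟩), ?_⟩
      intro h
      rcases Set.mem_iUnion.1 h with ⟨m, hm⟩
      exact ep_not_mem_segM n m hm

lemma pp_mem_closure_EP : pp ∈ closure (EP \ {pp}) := by
  apply mem_closure_of_tendsto tendsto_ep
  apply Filter.Eventually.of_forall
  intro n
  exact ⟨Or.inr ⟨n, rfl⟩, ep_ne_pp n⟩

lemma ep_not_mem_closure_EP (n : ℕ) : ep n ∉ closure (EP \ {ep n}) := by
  rw [Metric.mem_closure_iff]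
  push_neg
  refine ⟨min (gap n) (hh n), lt_min (gap_pos n) (hh_pos n), ?_⟩
  rintro q ⟨hq | ⟨m, rfl⟩, hq2⟩
  · rw [Set.mem_singleton_iff] at hq
    subst hq
    have h2 : |(ep n).1 - pp.1| = 2 * hh n := by
      have he : (ep n).1 - pp.1 = 2 * hh n := by
        show cc n - (-1) = 2 * hh n
        rw [cc_def]; ring
      rw [he, abs_of_nonneg (by linarith [hh_pos n])]
    calc gap n ⊓ hh n ≤ hh n := min_le_right _ _
      _ ≤ 2 * hh n := by linarith [hh_pos n]
      _ = |(ep n).1 - pp.1| := h2.symm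
      _ ≤ dist (ep n) pp := dist1 _ _
  · have hmn : m ≠ n := by
      rintro rfl
      exact hq2 rfl
    calc gap n ⊓ hh n ≤ gap n := min_le_left _ _
      _ ≤ |cc m - cc n| := cc_gap hmn
      _ = |(ep n).1 - (ep m).1| := by
          rw [abs_sub_comm (cc m) (cc n)]; rfl
      _ ≤ dist (ep n) (ep m) := dist1 _ _

/-! ### Branch points -/

def BB : Set (ℝ × ℝ) := CutSet ∩ closure (Y \ Kp)

lemma Y_diff_Kp_y {q : ℝ × ℝ} (h : q ∈ Y \ Kp) : q.2 ≤ 0 := by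
  by_contra hq
  push_neg at hq
  obtain ⟨n, hn⟩ := Y_pos_y h.1 hq
  exact h.2 (Or.inr (Set.mem_iUnion.2 ⟨n, hn⟩))

lemma cc_succ_lt (n : ℕ) : cc (n + 1) < cc n := cc_anti (Nat.lt_succ_self n)

lemma bpt_mem_closure_YKp (n : ℕ) : bpt n ∈ closure (Y \ Kp) := by
  set d := cc n - cc (n + 1) with hd
  have hd0 : 0 < d := by rw [hd]; linarith [cc_succ_lt n]
  have hseq : Filter.Tendsto (fun k => hI (cc n - d * hh (k + 1))) Filter.atTop (𝓝 (bpt n)) := by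
    have h1 : Filter.Tendsto (fun k : ℕ => hh (k + 1)) Filter.atTop (𝓝 0) :=
      tendsto_hh.comp (Filter.tendsto_add_atTop_nat 1)
    have h2 : Filter.Tendsto (fun k : ℕ => cc n - d * hh (k + 1)) Filter.atTop
        (𝓝 (cc n - d * 0)) := tendsto_const_nhds.sub ((h1.const_mul d))
    have h3 := (continuous_hI.tendsto (cc n - d * 0)).comp h2
    have h4 : hI (cc n - d * 0) = bpt n := by simp [hI, bpt]
    rw [h4] at h3
    exact h3
  apply mem_closure_of_tendsto hseq
  apply Filter.Eventually.of_forall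
  intro k
  set t := cc n - d * hh (k + 1) with hts
  have hb1 : cc (n + 1) < t := by
    have h5 := hh_pos (k + 1)
    have h6 : hh (k + 1) < 1 := by
      have := hh_anti (Nat.zero_lt_succ k)
      simpa [hh] using this
    have h7 : d * hh (k + 1) < d := by nlinarith
    rw [hd] at h7
    rw [hts, hd]
    linarith
  have hb2 : t < cc n := by
    have h5 := hh_pos (k + 1)
    rw [hts]
    nlinarith
  have htY : hI t ∈ Y := by
    apply horiz_subset_Y
    refine ⟨⟨?_, ?_⟩, rfl⟩
    · show (-1:ℝ) ≤ t
      linarith [neg_one_lt_cc (n + 1)]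
    · show t ≤ (1:ℝ)
      linarith [cc_le_one n]
  refine ⟨htY, ?_⟩
  rintro (h | h)
  · rw [Set.mem_singleton_iff] at h
    have : t = -1 := congrArg Prod.fst h
    linarith [neg_one_lt_cc (n + 1)]
  · rcases Set.mem_iUnion.1 h with ⟨m, hm⟩
    have hcm : t = cc m := hm.1
    have h7 : m < n + 1 := by
      by_contra h8
      push_neg at h8
      have : cc m ≤ cc (n + 1) := cc_anti.antitone h8
      linarith
    have h8 : n < m := by
      by_contra h9
      push_neg at h9
      have : cc n ≤ cc m := cc_anti.antitone h9
      linarith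
    omega

lemma BB_eq : BB = Set.range bpt := by
  ext p
  constructor
  · rintro ⟨hc, hcl⟩
    rw [CutSet_eq] at hc
    rcases Set.mem_iUnion.1 hc with ⟨n, hn⟩
    have h2 : p.2 ≤ 0 := by
      have hsub : closure (Y \ Kp) ⊆ {q : ℝ × ℝ | q.2 ≤ 0} :=
        closure_minimal (fun q hq => Y_diff_Kp_y hq)
          (isClosed_le continuous_snd continuous_const)
      exact hsub hcl
    refine ⟨n, ?_⟩
    exact (Prod.ext_iff.mpr ⟨hn.1, le_antisymm h2 hn.2.1⟩).symm
  · rintro ⟨n, rfl⟩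
    refine ⟨?_, bpt_mem_closure_YKp n⟩
    rw [CutSet_eq]
    exact Set.mem_iUnion.2 ⟨n, bpt_mem_segM n⟩

/-! ### Transfer machinery for a homeomorphism of `Y` -/

section Homeo

variable (f : ↥Y ≃ₜ ↥Y)

def Fim (S : Set (ℝ × ℝ)) : Set (ℝ × ℝ) :=
  Subtype.val '' (⇑f '' (Subtype.val ⁻¹' S))

lemma mem_Fim {S : Set (ℝ × ℝ)} {p : ℝ × ℝ} :
    p ∈ Fim f S ↔ ∃ x : ↥Y, (x : ℝ × ℝ) ∈ S ∧ ((f x : ↥Y) : ℝ × ℝ) = p := by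
  constructor
  · rintro ⟨y, ⟨x, hx, rfl⟩, rfl⟩
    exact ⟨x, hx, rfl⟩
  · rintro ⟨x, hx, rfl⟩
    exact ⟨f x, ⟨x, hx, rfl⟩, rfl⟩

lemma Fim_subset_Y (S : Set (ℝ × ℝ)) : Fim f S ⊆ Y := by
  rintro p ⟨y, _, rfl⟩
  exact y.2

lemma Fim_mono {S T : Set (ℝ × ℝ)} (h : S ⊆ T) : Fim f S ⊆ Fim f T :=
  Set.image_mono (Set.image_mono (Set.preimage_mono h))

lemma Fim_Y : Fim f Y = Y := by
  unfold Fim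
  have h1 : (Subtype.val ⁻¹' Y : Set ↥Y) = Set.univ := by
    ext x; simp [x.2]
  rw [h1, Set.image_univ, Homeomorph.range_coe, Set.image_univ, Subtype.range_coe]

lemma Fim_diff (S T : Set (ℝ × ℝ)) : Fim f (S \ T) = Fim f S \ Fim f T := by
  unfold Fim
  rw [Set.preimage_diff, Set.image_diff (f.injective), Set.image_diff Subtype.val_injective]

lemma Fim_union (S T : Set (ℝ × ℝ)) : Fim f (S ∪ T) = Fim f S ∪ Fim f T := by
  unfold Fim
  rw [Set.preimage_union, Set.image_union, Set.image_union]

lemma Fim_singleton (x : ↥Y) : Fim f {(x : ℝ × ℝ)} = {((f x : ↥Y) : ℝ × ℝ)} := by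
  unfold Fim
  have h1 : (Subtype.val ⁻¹' {(x : ℝ × ℝ)} : Set ↥Y) = {x} := by
    ext y; simp [Subtype.ext_iff]
  rw [h1, Set.image_singleton, Set.image_singleton]

lemma Fim_symm_Fim {S : Set (ℝ × ℝ)} (hS : S ⊆ Y) : Fim f.symm (Fim f S) = S := by
  unfold Fim
  rw [Set.preimage_image_eq _ Subtype.val_injective]
  have h2 : ⇑f.symm '' (⇑f '' (Subtype.val ⁻¹' S : Set ↥Y)) = Subtype.val ⁻¹' S := by
    rw [← Set.image_comp, Homeomorph.symm_comp_self, Set.image_id]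
  rw [h2]
  exact Set.image_preimage_eq_of_subset (by rwa [Subtype.range_coe])

lemma Fim_closure {S : Set (ℝ × ℝ)} (hS : S ⊆ Y) : Fim f (closure S) = closure (Fim f S) := by
  have hA : Subtype.val '' (Subtype.val ⁻¹' S : Set ↥Y) = S :=
    Set.image_preimage_eq_of_subset (by rwa [Subtype.range_coe])
  have h1 : (Subtype.val ⁻¹' closure S : Set ↥Y) = closure (Subtype.val ⁻¹' S) := by
    ext x
    rw [closure_subtype, hA]
    exact Iff.rfl
  unfold Fim
  rw [h1, f.image_closure]
  ext p
  constructor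
  · rintro ⟨y, hy, rfl⟩
    rw [closure_subtype] at hy
    exact hy
  · intro hp
    have hpY : p ∈ Y := by
      have : closure (Subtype.val '' (⇑f '' (Subtype.val ⁻¹' S))) ⊆ Y := by
        apply closure_minimal _ Y_closed
        rintro q ⟨y, _, rfl⟩
        exact y.2
      exact this hp
    refine ⟨⟨p, hpY⟩, ?_, rfl⟩
    rw [closure_subtype]
    exact hp

lemma Fim_preconn {S : Set (ℝ × ℝ)} (hS : S ⊆ Y) :
    IsPreconnected (Fim f S) ↔ IsPreconnected S := by
  have hA : Subtype.val '' (Subtype.val ⁻¹' S : Set ↥Y) = S :=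
    Set.image_preimage_eq_of_subset (by rwa [Subtype.range_coe])
  unfold Fim
  rw [IsInducing.subtypeVal.isPreconnected_image, f.isPreconnected_image,
    ← IsInducing.subtypeVal.isPreconnected_image (s := (Subtype.val ⁻¹' S : Set ↥Y)), hA]

end Homeo

/-! ### The pieces of `Y` minus branch points -/

lemma exists_interval {t : ℝ} (h1 : -1 < t) (h2 : t < 1) (h3 : ∀ m, t ≠ cc m) :
    ∃ n, cc (n + 1) < t ∧ t < cc n := by
  have hex : ∃ m, cc m < t := (tendsto_cc.eventually_lt_const h1).exists
  classical
  have hm0 : cc (Nat.find hex) < t := Nat.find_spec hex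
  have hm0pos : Nat.find hex ≠ 0 := by
    intro h
    rw [h, cc_zero] at hm0
    linarith
  obtain ⟨n, hn⟩ := Nat.exists_eq_succ_of_ne_zero hm0pos
  rw [hn] at hm0
  refine ⟨n, hm0, ?_⟩
  have hmin := Nat.find_min hex (m := n) (by omega)
  rcases lt_or_eq_of_le (not_lt.1 hmin) with h | h
  · exact h
  · exact absurd h (h3 n)

lemma cc_succ_cast (n : ℕ) : cc (n + 1) = -1 + 2 / ((n : ℝ) + 2) := by
  unfold cc
  push_cast
  ring_nf

lemma arcH_eq (n : ℕ) : arcH n = {p : ℝ × ℝ | p.1 ∈ Set.Icc (cc (n + 1)) (cc n) ∧ p.2 = 0} := by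
  unfold arcH
  rw [cc_succ_cast]
  rfl

def Cp : Set (ℝ × ℝ) := {p : ℝ × ℝ | p ∈ arcC ∧ p.2 < 0}
def Hp (n : ℕ) : Set (ℝ × ℝ) := {p : ℝ × ℝ | cc (n + 1) < p.1 ∧ p.1 < cc n ∧ p.2 = 0}
def Vp (n : ℕ) : Set (ℝ × ℝ) := {p : ℝ × ℝ | p.1 = cc n ∧ 0 < p.2 ∧ p.2 ≤ hh n}
def FF : Set (ℝ × ℝ) := Y \ (Set.range bpt ∪ {pp})

lemma Cp_eq_image : Cp = g '' Set.Ioo (-1) 1 := by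
  ext p
  constructor
  · rintro ⟨h1, h2⟩
    obtain ⟨ha, hb⟩ := arcC_fst_lt h1 h2
    exact ⟨p.1, ⟨ha, hb⟩, (mem_arcC_eq_g h1).symm⟩
  · rintro ⟨t, ⟨ht1, ht2⟩, rfl⟩
    exact ⟨g_mem_arcC ⟨ht1.le, ht2.le⟩, g_snd_neg ht1 ht2⟩

lemma Hp_eq_image (n : ℕ) : Hp n = hI '' Set.Ioo (cc (n + 1)) (cc n) := by
  ext p
  constructor
  · rintro ⟨h1, h2, h3⟩
    exact ⟨p.1, ⟨h1, h2⟩, (Prod.ext_iff.mpr ⟨rfl, h3.symm⟩)⟩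
  · rintro ⟨t, ⟨ht1, ht2⟩, rfl⟩
    exact ⟨ht1, ht2, rfl⟩

lemma Vp_eq_image (n : ℕ) : Vp n = vI n '' Set.Ioc 0 (hh n) := by
  ext p
  constructor
  · rintro ⟨h1, h2, h3⟩
    exact ⟨p.2, ⟨h2, h3⟩, (Prod.ext_iff.mpr ⟨h1.symm, rfl⟩)⟩
  · rintro ⟨y, ⟨hy1, hy2⟩, rfl⟩
    exact ⟨rfl, hy1, hy2⟩

lemma Cp_preconn : IsPreconnected Cp := by
  rw [Cp_eq_image]; exact preconn_image_g isPreconnected_Ioo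
lemma Hp_preconn (n : ℕ) : IsPreconnected (Hp n) := by
  rw [Hp_eq_image]; exact preconn_image_hI isPreconnected_Ioo
lemma Vp_preconn (n : ℕ) : IsPreconnected (Vp n) := by
  rw [Vp_eq_image]; exact preconn_image_vI isPreconnected_Ioc

lemma closure_Cp : closure Cp = arcC := by
  apply Set.Subset.antisymm
  · exact closure_minimal (fun p hp => hp.1) arcC_closed
  · rw [arcC_eq_image, ← closure_Ioo (by norm_num : (-1:ℝ) ≠ 1), Cp_eq_image]
    exact (image_closure_subset_closure_image continuous_g)

lemma closure_Hp (n : ℕ) : closure (Hp n) = arcH n := by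
  apply Set.Subset.antisymm
  · have hcl : IsClosed (arcH n) := by
      rw [arcH_eq]
      exact (isClosed_Icc.preimage continuous_fst).inter
        (isClosed_eq continuous_snd continuous_const)
    apply closure_minimal _ hcl
    rintro p ⟨h1, h2, h3⟩
    rw [arcH_eq]
    exact ⟨⟨h1.le, h2.le⟩, h3⟩
  · have him : arcH n = hI '' Set.Icc (cc (n + 1)) (cc n) := by
      rw [arcH_eq]
      ext p
      constructor
      · rintro ⟨h1, h2⟩
        exact ⟨p.1, h1, Prod.ext_iff.mpr ⟨rfl, h2.symm⟩⟩
      · rintro ⟨t, ht, rfl⟩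
        exact ⟨ht, rfl⟩
    rw [him, ← closure_Ioo (ne_of_lt (cc_succ_lt n)), Hp_eq_image]
    exact image_closure_subset_closure_image continuous_hI

lemma closure_Vp (n : ℕ) : closure (Vp n) = arcV n := by
  apply Set.Subset.antisymm
  · apply closure_minimal _ (arcV_closed n)
    rintro p ⟨h1, h2, h3⟩
    rw [arcV_eq]
    exact ⟨h1, h2.le, h3⟩
  · rw [arcV_eq_image, ← closure_Ioc (ne_of_lt (hh_pos n)), Vp_eq_image]
    exact image_closure_subset_closure_image (continuous_vI n)

def OC : Set (ℝ × ℝ) := {p : ℝ × ℝ | p.2 < 0}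
def OH (n : ℕ) : Set (ℝ × ℝ) := {p : ℝ × ℝ | cc (n + 1) < p.1 ∧ p.1 < cc n ∧ 0 < p.2 + (1 - p.1 ^ 2)}
def OV (n : ℕ) : Set (ℝ × ℝ) := {p : ℝ × ℝ | 0 < p.2 ∧ |p.1 - cc n| < gap n}

lemma OC_open : IsOpen OC := isOpen_lt continuous_snd continuous_const
lemma OH_open (n : ℕ) : IsOpen (OH n) := by
  apply IsOpen.inter (isOpen_lt continuous_const continuous_fst)
  exact IsOpen.inter (isOpen_lt continuous_fst continuous_const)
    (isOpen_lt continuous_const (continuous_snd.add (continuous_const.sub (continuous_fst.pow 2))))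
lemma OV_open (n : ℕ) : IsOpen (OV n) := by
  apply IsOpen.inter (isOpen_lt continuous_const continuous_snd)
  exact isOpen_lt ((continuous_fst.sub continuous_const).abs) continuous_const

lemma bpt_ne_mem {p : ℝ × ℝ} (hp2 : p.2 ≠ 0) : p ∉ Set.range bpt := by
  rintro ⟨m, rfl⟩
  exact hp2 rfl

lemma FF_inter_OC : FF ∩ OC = Cp := by
  ext p
  constructor
  · rintro ⟨⟨hY, _⟩, h2⟩
    exact ⟨Y_neg_y hY h2, h2⟩
  · rintro ⟨h1, h2⟩
    refine ⟨⟨arcC_subset_Y h1, ?_⟩, h2⟩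
    rintro (h | h)
    · exact bpt_ne_mem (ne_of_lt h2) h
    · rw [Set.mem_singleton_iff] at h
      rw [h] at h2
      exact absurd h2 (by norm_num [pp])

lemma FF_inter_OV (n : ℕ) : FF ∩ OV n = Vp n := by
  ext p
  constructor
  · rintro ⟨⟨hY, _⟩, h2, h3⟩
    obtain ⟨m, hm⟩ := Y_pos_y hY h2
    rw [arcV_eq] at hm
    have hmn : m = n := by
      by_contra hne
      have := cc_gap hne
      rw [← hm.1] at this
      linarith
    subst hmn
    exact ⟨hm.1, h2, hm.2.2⟩
  · rintro ⟨h1, h2, h3⟩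
    have hpV : p ∈ arcV n := by rw [arcV_eq]; exact ⟨h1, h2.le, h3⟩
    refine ⟨⟨arcV_subset_Y n hpV, ?_⟩, h2, by rw [h1]; simpa using gap_pos n⟩
    rintro (h | h)
    · exact bpt_ne_mem (ne_of_gt h2) h
    · rw [Set.mem_singleton_iff] at h
      rw [h] at h2
      exact absurd h2 (by norm_num [pp])

lemma FF_inter_OH (n : ℕ) : FF ∩ OH n = Hp n := by
  ext p
  constructor
  · rintro ⟨⟨hY, hnb⟩, h1, h2, h3⟩
    rcases lt_trichotomy p.2 0 with hy | hy | hy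
    · exfalso
      have hc := Y_neg_y hY hy
      have hcirc := hc.1
      nlinarith
    · exact ⟨h1, h2, hy⟩
    · exfalso
      obtain ⟨m, hm⟩ := Y_pos_y hY hy
      rw [arcV_eq] at hm
      have h4 : m < n + 1 := by
        by_contra h5
        push_neg at h5
        have : cc m ≤ cc (n + 1) := cc_anti.antitone h5
        rw [← hm.1] at this
        linarith
      have h5 : n < m := by
        by_contra h6
        push_neg at h6
        have : cc n ≤ cc m := cc_anti.antitone h6
        rw [← hm.1] at this
        linarith
      omega
  · rintro ⟨h1, h2, h3⟩
    have hb1 : -1 < p.1 := lt_trans (neg_one_lt_cc (n + 1)) h1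
    have hb2 : p.1 < 1 := lt_of_lt_of_le h2 (cc_le_one n)
    have hpY : p ∈ Y := horiz_subset_Y ⟨⟨hb1.le, hb2.le⟩, h3⟩
    refine ⟨⟨hpY, ?_⟩, h1, h2, by rw [h3]; nlinarith⟩
    rintro (h | h)
    · rcases h with ⟨m, hm⟩
      have hcm : cc m = p.1 := congrArg Prod.fst hm
      have h4 : m < n + 1 := by
        by_contra h5
        push_neg at h5
        have : cc m ≤ cc (n + 1) := cc_anti.antitone h5
        linarith
      have h5 : n < m := by
        by_contra h6
        push_neg at h6
        have : cc n ≤ cc m := cc_anti.antitone h6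
        linarith
      omega
    · rw [Set.mem_singleton_iff] at h
      have : p.1 = -1 := by rw [h]; rfl
      linarith

lemma Cp_subset_FF : Cp ⊆ FF := by
  rw [← FF_inter_OC]; exact Set.inter_subset_left
lemma Hp_subset_FF (n : ℕ) : Hp n ⊆ FF := by
  rw [← FF_inter_OH]; exact Set.inter_subset_left
lemma Vp_subset_FF (n : ℕ) : Vp n ⊆ FF := by
  rw [← FF_inter_OV]; exact Set.inter_subset_left

/-! ### Indexed pieces -/

def Pc : Sum ℕ (Sum ℕ Unit) → Set (ℝ × ℝ)
  | Sum.inl n => Hp n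
  | Sum.inr (Sum.inl n) => Vp n
  | Sum.inr (Sum.inr _) => Cp

def Oc : Sum ℕ (Sum ℕ Unit) → Set (ℝ × ℝ)
  | Sum.inl n => OH n
  | Sum.inr (Sum.inl n) => OV n
  | Sum.inr (Sum.inr _) => OC

lemma Oc_open : ∀ i, IsOpen (Oc i)
  | Sum.inl n => OH_open n
  | Sum.inr (Sum.inl n) => OV_open n
  | Sum.inr (Sum.inr _) => OC_open

lemma FF_inter_Oc : ∀ i, FF ∩ Oc i = Pc i
  | Sum.inl n => FF_inter_OH n
  | Sum.inr (Sum.inl n) => FF_inter_OV n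
  | Sum.inr (Sum.inr _) => FF_inter_OC

lemma Pc_preconn : ∀ i, IsPreconnected (Pc i)
  | Sum.inl n => Hp_preconn n
  | Sum.inr (Sum.inl n) => Vp_preconn n
  | Sum.inr (Sum.inr _) => Cp_preconn

lemma Pc_subset_FF : ∀ i, Pc i ⊆ FF
  | Sum.inl n => Hp_subset_FF n
  | Sum.inr (Sum.inl n) => Vp_subset_FF n
  | Sum.inr (Sum.inr _) => Cp_subset_FF

lemma FF_subset_Y : FF ⊆ Y := Set.diff_subset

lemma Pc_subset_Y (i) : Pc i ⊆ Y := (Pc_subset_FF i).trans FF_subset_Y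

lemma Hp_nonempty (n : ℕ) : (Hp n).Nonempty := by
  refine ⟨((cc (n + 1) + cc n) / 2, 0), ?_, ?_, rfl⟩
  · have := cc_succ_lt n; simp; linarith
  · have := cc_succ_lt n; simp; linarith

lemma Cp_nonempty : Cp.Nonempty := by
  refine ⟨((0:ℝ), (-1:ℝ)), ⟨?_, ?_⟩, ?_⟩ <;> norm_num

lemma Pc_nonempty : ∀ i, (Pc i).Nonempty
  | Sum.inl n => Hp_nonempty n
  | Sum.inr (Sum.inl n) => ⟨ep n, rfl, hh_pos n, le_refl _⟩
  | Sum.inr (Sum.inr _) => Cp_nonempty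

lemma FF_subset_union : FF ⊆ ⋃ i, Pc i := by
  rintro p ⟨hY, hnot⟩
  rcases lt_trichotomy p.2 0 with hy | hy | hy
  · exact Set.mem_iUnion.2 ⟨Sum.inr (Sum.inr ()), Y_neg_y hY hy, hy⟩
  · have hne_pp : p ≠ pp := fun h => hnot (Or.inr h)
    have hnb : ∀ m, p.1 ≠ cc m := by
      intro m hm
      exact hnot (Or.inl ⟨m, (Prod.ext_iff.mpr ⟨hm, hy⟩).symm⟩)
    have h1 : -1 < p.1 := by
      rcases mem_Y_iff.1 hY with h | h | h
      · rcases arcC_eq_y h hy with h2 | h2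
        · rw [h2]; norm_num
        · exact absurd (Prod.ext_iff.mpr ⟨h2, hy⟩) hne_pp
      · rcases lt_or_eq_of_le h.1.1 with h2 | h2
        · exact h2
        · exact absurd (Prod.ext_iff.mpr ⟨h2.symm, hy⟩) hne_pp
      · rcases h with ⟨m, hm⟩
        exact absurd hm.1 (hnb m)
    have h2 : p.1 < 1 := by
      have h3 : p.1 ≤ 1 := by
        rcases mem_Y_iff.1 hY with h | h | h
        · exact (arcC_fst_mem h).2
        · exact h.1.2
        · rcases h with ⟨m, hm⟩
          exact absurd hm.1 (hnb m)
      rcases lt_or_eq_of_le h3 with h4 | h4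
      · exact h4
      · exfalso
        apply hnb 0
        rw [h4, cc_zero]
    obtain ⟨n, hn1, hn2⟩ := exists_interval h1 h2 hnb
    exact Set.mem_iUnion.2 ⟨Sum.inl n, hn1, hn2, hy⟩
  · obtain ⟨m, hm⟩ := Y_pos_y hY hy
    rw [arcV_eq] at hm
    exact Set.mem_iUnion.2 ⟨Sum.inr (Sum.inl m), hm.1, hy, hm.2.2⟩

lemma Hp_disj {n m : ℕ} (h : n ≠ m) : Hp n ∩ Hp m = ∅ := by
  rw [Set.eq_empty_iff_forall_notMem]
  rintro p ⟨⟨h1, h2, _⟩, ⟨h3, h4, _⟩⟩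
  rcases lt_or_gt_of_ne h with h5 | h5
  · have : cc m ≤ cc (n + 1) := cc_anti.antitone (by omega)
    linarith
  · have : cc n ≤ cc (m + 1) := cc_anti.antitone (by omega)
    linarith

lemma Pc_disjoint : ∀ i j, i ≠ j → Pc i ∩ Pc j = ∅ := by
  have hHV : ∀ n m, Hp n ∩ Vp m = ∅ := by
    intro n m
    rw [Set.eq_empty_iff_forall_notMem]
    rintro p ⟨⟨_, _, h1⟩, ⟨_, h2, _⟩⟩
    rw [h1] at h2
    exact lt_irrefl _ h2
  have hHC : ∀ n, Hp n ∩ Cp = ∅ := by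
    intro n
    rw [Set.eq_empty_iff_forall_notMem]
    rintro p ⟨⟨_, _, h1⟩, ⟨_, h2⟩⟩
    rw [h1] at h2
    exact lt_irrefl _ h2
  have hVC : ∀ n, Vp n ∩ Cp = ∅ := by
    intro n
    rw [Set.eq_empty_iff_forall_notMem]
    rintro p ⟨⟨_, h1, _⟩, ⟨_, h2⟩⟩
    linarith
  have hVV : ∀ n m, n ≠ m → Vp n ∩ Vp m = ∅ := by
    intro n m h
    rw [Set.eq_empty_iff_forall_notMem]
    rintro p ⟨⟨h1, _⟩, ⟨h2, _⟩⟩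
    rw [h1] at h2
    exact h (cc_inj h2)
  rintro (n | n | u) (m | m | v) hij
  · exact Hp_disj (by simpa using hij)
  · exact hHV n m
  · exact hHC n
  · rw [Set.inter_comm]; exact hHV m n
  · exact hVV n m (by simpa using hij)
  · exact hVC n
  · rw [Set.inter_comm]; exact hHC m
  · rw [Set.inter_comm]; exact hVC m
  · exact absurd (by rfl : u = v) (by simpa using hij)

lemma subset_single_piece {T : Set (ℝ × ℝ)} (hT : T ⊆ FF) (hpre : IsPreconnected T)
    (hne : T.Nonempty) : ∃ i, T ⊆ Pc i := by
  obtain ⟨p, hp⟩ := hne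
  obtain ⟨i, hpi⟩ := Set.mem_iUnion.1 (FF_subset_union (hT hp))
  refine ⟨i, ?_⟩
  by_contra hsub
  rw [Set.not_subset] at hsub
  obtain ⟨q, hq, hqn⟩ := hsub
  obtain ⟨j, hqj⟩ := Set.mem_iUnion.1 (FF_subset_union (hT hq))
  have hij : j ≠ i := by
    rintro rfl
    exact hqn hqj
  have hcov : T ⊆ Oc i ∪ ⋃ k ∈ ({j : Sum ℕ (Sum ℕ Unit) | j ≠ i} : Set _), Oc k := by
    intro r hr
    obtain ⟨k, hrk⟩ := Set.mem_iUnion.1 (FF_subset_union (hT hr))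
    by_cases hk : k = i
    · subst hk
      exact Or.inl (((FF_inter_Oc k).symm ▸ hrk).2)
    · exact Or.inr (Set.mem_biUnion hk (((FF_inter_Oc k).symm ▸ hrk).2))
  obtain ⟨r, hrT, hru, hrv⟩ := hpre _ _ (Oc_open i)
    (isOpen_biUnion fun k _ => Oc_open k) hcov
    ⟨p, hp, ((FF_inter_Oc i).symm ▸ hpi).2⟩
    ⟨q, hq, Set.mem_biUnion hij (((FF_inter_Oc j).symm ▸ hqj).2)⟩
  obtain ⟨k, hki, hrk⟩ := Set.mem_iUnion₂.1 hrv
  have hri : r ∈ Pc i := by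
    rw [← FF_inter_Oc i]
    exact ⟨hT hrT, hru⟩
  have hrkp : r ∈ Pc k := by
    rw [← FF_inter_Oc k]
    exact ⟨hT hrT, hrk⟩
  have := Pc_disjoint i k (Ne.symm hki)
  rw [Set.eq_empty_iff_forall_notMem] at this
  exact this r ⟨hri, hrkp⟩

/-! ### Invariance under the homeomorphism -/

lemma CutSet_subset_Y : CutSet ⊆ Y := fun _ hp => hp.1

lemma EP_subset_Y : EP ⊆ Y := by
  rintro p (h | ⟨n, rfl⟩)
  · rw [Set.mem_singleton_iff] at h
    rw [h]
    exact pp_mem_Y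
  · exact ep_mem_Y n

lemma EP_diff_pp : EP \ {pp} = Set.range ep := by
  ext p
  constructor
  · rintro ⟨h | h, hne⟩
    · exact absurd h hne
    · exact h
  · rintro ⟨m, rfl⟩
    exact ⟨Or.inr ⟨m, rfl⟩, ep_ne_pp m⟩

lemma arcH_subset_Y (n : ℕ) : arcH n ⊆ Y := by
  intro p hp
  rw [arcH_eq] at hp
  apply horiz_subset_Y
  refine ⟨⟨le_trans (neg_one_lt_cc (n + 1)).le hp.1.1, le_trans hp.1.2 (cc_le_one n)⟩, hp.2⟩

lemma Cp_inter_rangeEp : Cp ∩ Set.range ep = ∅ := by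
  rw [Set.eq_empty_iff_forall_notMem]
  rintro p ⟨⟨_, h2⟩, ⟨m, rfl⟩⟩
  exact absurd h2 (not_lt.2 (hh_pos m).le)

lemma Hp_inter_rangeEp (n : ℕ) : Hp n ∩ Set.range ep = ∅ := by
  rw [Set.eq_empty_iff_forall_notMem]
  rintro p ⟨⟨_, _, h3⟩, ⟨m, rfl⟩⟩
  exact absurd h3 (ne_of_gt (hh_pos m))

lemma Vp_inter_rangeEp (n : ℕ) : Vp n ∩ Set.range ep = {ep n} := by
  ext p
  constructor
  · rintro ⟨⟨h1, _, _⟩, ⟨m, rfl⟩⟩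
    have : m = n := cc_inj h1
    rw [this]
    rfl
  · rintro h
    rw [Set.mem_singleton_iff] at h
    subst h
    exact ⟨⟨rfl, hh_pos n, le_refl _⟩, ⟨n, rfl⟩⟩

lemma arcC_diff_Cp : arcC \ Cp = {pp} ∪ {((1:ℝ), (0:ℝ))} := by
  ext p
  constructor
  · rintro ⟨h1, h2⟩
    have hy : p.2 = 0 := le_antisymm h1.2 (not_lt.1 fun h => h2 ⟨h1, h⟩)
    rcases arcC_eq_y h1 hy with h3 | h3
    · refine Or.inr ?_
      rw [Set.mem_singleton_iff]
      exact Prod.ext_iff.mpr ⟨h3, by rw [hy]⟩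
    · refine Or.inl ?_
      rw [Set.mem_singleton_iff]
      exact Prod.ext_iff.mpr ⟨h3, by rw [hy]; rfl⟩
  · rintro (h | h) <;> rw [Set.mem_singleton_iff] at h <;> subst h
    · exact ⟨pp_mem_arcC, fun hc => absurd hc.2 (by norm_num [pp])⟩
    · exact ⟨one_zero_mem_arcC, fun hc => absurd hc.2 (by norm_num)⟩

lemma arcH_diff_Hp (n : ℕ) : arcH n \ Hp n = {bpt (n + 1)} ∪ {bpt n} := by
  ext p
  constructor
  · rintro ⟨h1, h2⟩
    rw [arcH_eq] at h1
    obtain ⟨⟨ha, hb⟩, hy⟩ := h1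
    rcases eq_or_lt_of_le ha with h3 | h3
    · refine Or.inl ?_
      rw [Set.mem_singleton_iff]
      show p = (cc (n + 1), 0)
      exact Prod.ext_iff.mpr ⟨h3.symm, hy⟩
    rcases eq_or_lt_of_le hb with h4 | h4
    · refine Or.inr ?_
      rw [Set.mem_singleton_iff]
      show p = (cc n, 0)
      exact Prod.ext_iff.mpr ⟨h4, hy⟩
    · exact absurd ⟨h3, h4, hy⟩ h2
  · rintro (h | h) <;> rw [Set.mem_singleton_iff] at h <;> subst h
    · refine ⟨by rw [arcH_eq]; exact ⟨⟨le_refl _, (cc_succ_lt n).le⟩, rfl⟩, ?_⟩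
      rintro ⟨h1, _, _⟩
      exact lt_irrefl _ h1
    · refine ⟨by rw [arcH_eq]; exact ⟨⟨(cc_succ_lt n).le, le_refl _⟩, rfl⟩, ?_⟩
      rintro ⟨_, h2, _⟩
      exact lt_irrefl _ h2

lemma cc_mem_Icc_cases {n m : ℕ} (h : cc n ∈ Set.Icc (cc (m + 1)) (cc m)) :
    m = n ∨ m + 1 = n := by
  have h1 : n ≤ m + 1 := by
    by_contra h2
    push_neg at h2
    have := cc_anti h2
    linarith [h.1]
  have h2 : m ≤ n := by
    by_contra h3
    push_neg at h3
    have := cc_anti h3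
    linarith [h.2]
  omega

section Homeo2

variable (f : ↥Y ≃ₜ ↥Y)

lemma Fim_inter (S T : Set (ℝ × ℝ)) : Fim f (S ∩ T) = Fim f S ∩ Fim f T := by
  unfold Fim
  rw [Set.preimage_inter, Set.image_inter f.injective, Set.image_inter Subtype.val_injective]

lemma Fim_empty : Fim f ∅ = ∅ := by
  unfold Fim
  simp

lemma Fim_Fim_symm {S : Set (ℝ × ℝ)} (hS : S ⊆ Y) : Fim f (Fim f.symm S) = S := by
  have h := Fim_symm_Fim f.symm hS
  rwa [Homeomorph.symm_symm] at h

lemma Fim_CutSet_subset : Fim f CutSet ⊆ CutSet := by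
  intro p hp
  rw [mem_Fim] at hp
  obtain ⟨x, ⟨hxY, hxcut⟩, rfl⟩ := hp
  refine ⟨(f x).2, ?_⟩
  intro hpre
  apply hxcut
  have hFim : Fim f (Y \ {(x : ℝ × ℝ)}) = Y \ {((f x : ↥Y) : ℝ × ℝ)} := by
    rw [Fim_diff, Fim_Y, Fim_singleton]
  rw [← Fim_preconn f (Set.diff_subset : Y \ {(x : ℝ × ℝ)} ⊆ Y), hFim]
  exact hpre

lemma Fim_CutSet : Fim f CutSet = CutSet := by
  apply Set.Subset.antisymm (Fim_CutSet_subset f)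
  have h1 := Fim_CutSet_subset f.symm
  have h2 := Fim_mono f h1
  rwa [Fim_Fim_symm f CutSet_subset_Y] at h2

lemma Fim_Kp : Fim f Kp = Kp := by
  rw [← closure_CutSet, Fim_closure f CutSet_subset_Y, Fim_CutSet]

lemma Fim_EP : Fim f EP = EP := by
  rw [← Kp_diff_CutSet, Fim_diff, Fim_Kp, Fim_CutSet]

lemma Fim_clYKp : Fim f (closure (Y \ Kp)) = closure (Y \ Kp) := by
  rw [Fim_closure f Set.diff_subset, Fim_diff, Fim_Y, Fim_Kp]

lemma Fim_BB : Fim f BB = BB := by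
  unfold BB
  rw [Fim_inter, Fim_CutSet, Fim_clYKp]

def ppY : ↥Y := ⟨pp, pp_mem_Y⟩
def bptY (n : ℕ) : ↥Y := ⟨bpt n, bpt_mem_Y n⟩
def epY (n : ℕ) : ↥Y := ⟨ep n, ep_mem_Y n⟩

lemma f_pp : f ppY = ppY := by
  have h1 : ((f ppY : ↥Y) : ℝ × ℝ) ∈ EP := by
    have h2 : ((f ppY : ↥Y) : ℝ × ℝ) ∈ Fim f EP := (mem_Fim f).2 ⟨ppY, Or.inl rfl, rfl⟩
    rwa [Fim_EP] at h2
  have h3 : ((f ppY : ↥Y) : ℝ × ℝ) ∈ closure (EP \ {((f ppY : ↥Y) : ℝ × ℝ)}) := by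
    have hsub : EP \ {((ppY : ↥Y) : ℝ × ℝ)} ⊆ Y := (Set.diff_subset).trans EP_subset_Y
    have h4 : Fim f (closure (EP \ {((ppY : ↥Y) : ℝ × ℝ)})) =
        closure (EP \ {((f ppY : ↥Y) : ℝ × ℝ)}) := by
      rw [Fim_closure f hsub, Fim_diff, Fim_EP, Fim_singleton]
    rw [← h4]
    exact (mem_Fim f).2 ⟨ppY, pp_mem_closure_EP, rfl⟩
  rcases h1 with h | ⟨n, hn⟩
  · exact Subtype.ext h
  · exfalso
    rw [← hn] at h3
    exact ep_not_mem_closure_EP n h3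

lemma Fim_pp : Fim f {pp} = {pp} := by
  have h := Fim_singleton f ppY
  rw [f_pp] at h
  exact h

lemma Fim_rangeEp : Fim f (Set.range ep) = Set.range ep := by
  rw [← EP_diff_pp, Fim_diff, Fim_EP, Fim_pp]

lemma Fim_rangeBpt : Fim f (Set.range bpt) = Set.range bpt := by
  rw [← BB_eq, Fim_BB]

lemma Fim_FF : Fim f FF = FF := by
  unfold FF
  rw [Fim_diff, Fim_Y, Fim_union, Fim_rangeBpt, Fim_pp]

lemma Fim_Pc (i : Sum ℕ (Sum ℕ Unit)) : ∃ j, Fim f (Pc i) = Pc j := by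
  have hsub : ∀ (g : ↥Y ≃ₜ ↥Y) (k), ∃ j, Fim g (Pc k) ⊆ Pc j := by
    intro g k
    apply subset_single_piece
    · rw [← Fim_FF g]
      exact Fim_mono g (Pc_subset_FF k)
    · exact (Fim_preconn g (Pc_subset_Y k)).2 (Pc_preconn k)
    · obtain ⟨p, hp⟩ := Pc_nonempty k
      exact ⟨_, (mem_Fim g).2 ⟨⟨p, Pc_subset_Y k hp⟩, hp, rfl⟩⟩
  obtain ⟨j, hj⟩ := hsub f i
  obtain ⟨k, hk⟩ := hsub f.symm j
  have h1 : Pc i ⊆ Pc k := by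
    have h2 := Fim_mono f.symm hj
    rw [Fim_symm_Fim f (Pc_subset_Y i)] at h2
    exact h2.trans hk
  have hik : i = k := by
    by_contra hne
    obtain ⟨p, hp⟩ := Pc_nonempty i
    have hd := Pc_disjoint i k hne
    rw [Set.eq_empty_iff_forall_notMem] at hd
    exact hd p ⟨hp, h1 hp⟩
  subst hik
  refine ⟨j, Set.Subset.antisymm hj ?_⟩
  have h3 := Fim_mono f hk
  rwa [Fim_Fim_symm f (Pc_subset_Y j)] at h3

end Homeo2

lemma Cp_subset_arcC : Cp ⊆ arcC := fun _ hp => hp.1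

lemma Cp_subset_Y : Cp ⊆ Y := Cp_subset_arcC.trans arcC_subset_Y

section Endgame

variable (f : ↥Y ≃ₜ ↥Y)

lemma Fim_bpt_singleton (n : ℕ) :
    Fim f {bpt n} = {((f (bptY n) : ↥Y) : ℝ × ℝ)} := Fim_singleton f (bptY n)

lemma Fim_ep_singleton (n : ℕ) :
    Fim f {ep n} = {((f (epY n) : ↥Y) : ℝ × ℝ)} := Fim_singleton f (epY n)

lemma Fim_Cp : Fim f Cp = Cp := by
  obtain ⟨j, hj⟩ := Fim_Pc f (Sum.inr (Sum.inr ()))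
  simp only [Pc] at hj
  rcases j with n | n | u
  · exfalso
    simp only [Pc] at hj
    have h1 : ({pp} : Set (ℝ × ℝ)) ⊆ closure Cp := by
      rw [closure_Cp]
      intro q hq
      rw [Set.mem_singleton_iff] at hq
      rw [hq]
      exact pp_mem_arcC
    have h5 := Fim_mono f h1
    rw [Fim_pp, Fim_closure f Cp_subset_Y, hj] at h5
    have h2 : pp ∈ closure (Hp n) := h5 rfl
    rw [closure_Hp n, arcH_eq] at h2
    have h6 : cc (n + 1) ≤ pp.1 := h2.1.1
    have : pp.1 = -1 := rfl
    linarith [neg_one_lt_cc (n + 1)]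
  · exfalso
    simp only [Pc] at hj
    have h1 : Fim f (Cp ∩ Set.range ep) = Vp n ∩ Set.range ep := by
      rw [Fim_inter, hj, Fim_rangeEp]
    rw [Cp_inter_rangeEp, Vp_inter_rangeEp, Fim_empty] at h1
    exact absurd h1.symm (Set.singleton_ne_empty _)
  · simpa only [Pc] using hj

lemma Fim_arcC : Fim f arcC = arcC := by
  rw [← closure_Cp, Fim_closure f (Cp_subset_Y), Fim_Cp]

lemma f_bpt0 : f (bptY 0) = bptY 0 := by
  have h1 : Fim f (arcC \ Cp) = arcC \ Cp := by rw [Fim_diff, Fim_arcC, Fim_Cp]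
  rw [arcC_diff_Cp] at h1
  have h2 : ({((1:ℝ), (0:ℝ))} : Set (ℝ × ℝ)) = {((bptY 0 : ↥Y) : ℝ × ℝ)} := by
    rw [show ((bptY 0 : ↥Y) : ℝ × ℝ) = bpt 0 from rfl, bpt_zero]
  rw [Fim_union, Fim_pp, h2, Fim_singleton] at h1
  have h3 : ((f (bptY 0) : ↥Y) : ℝ × ℝ) ∈
      ({pp} : Set (ℝ × ℝ)) ∪ {((bptY 0 : ↥Y) : ℝ × ℝ)} := by
    rw [← h1]
    exact Or.inr rfl
  rcases h3 with h | h
  · exfalso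
    have h4 : f (bptY 0) = ppY := Subtype.ext h
    have h6 : bptY 0 = ppY := f.injective (by rw [h4, f_pp])
    have h7 : bpt 0 = pp := congrArg Subtype.val h6
    have h8 : (bpt 0).1 = (-1 : ℝ) := by rw [h7]; rfl
    rw [bpt_zero] at h8
    norm_num at h8
  · exact Subtype.ext h

lemma Fim_Hp_piece (n : ℕ) : ∃ m, Fim f (Hp n) = Hp m := by
  obtain ⟨j, hj⟩ := Fim_Pc f (Sum.inl n)
  simp only [Pc] at hj
  rcases j with m | m | u
  · exact ⟨m, by simpa only [Pc] using hj⟩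
  · exfalso
    simp only [Pc] at hj
    have h1 : Fim f (Hp n ∩ Set.range ep) = Vp m ∩ Set.range ep := by
      rw [Fim_inter, hj, Fim_rangeEp]
    rw [Hp_inter_rangeEp, Vp_inter_rangeEp, Fim_empty] at h1
    exact absurd h1.symm (Set.singleton_ne_empty _)
  · exfalso
    simp only [Pc] at hj
    have h2 : Fim f.symm Cp = Cp := by
      have h3 := Fim_symm_Fim f Cp_subset_Y
      rwa [Fim_Cp] at h3
    have h4 : Hp n = Cp := by
      have h5 := congrArg (Fim f.symm) hj
      rwa [Fim_symm_Fim f ((Hp_subset_FF n).trans FF_subset_Y), h2] at h5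
    obtain ⟨p, hp⟩ := Hp_nonempty n
    have hpc : p ∈ Cp := h4 ▸ hp
    have h9 := hpc.2
    rw [hp.2.2] at h9
    exact lt_irrefl 0 h9

lemma Hp_target {n m : ℕ} (hb : ((f (bptY n) : ↥Y) : ℝ × ℝ) = bpt n)
    (hm : Fim f (Hp n) = Hp m) : m = n ∨ m + 1 = n := by
  have h1 : ({bpt n} : Set (ℝ × ℝ)) ⊆ closure (Hp n) := by
    rw [closure_Hp n, arcH_eq]
    intro q hq
    rw [Set.mem_singleton_iff] at hq
    rw [hq]
    exact ⟨⟨(cc_succ_lt n).le, le_refl _⟩, rfl⟩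
  have h2 := Fim_mono f h1
  rw [Fim_closure f ((Hp_subset_FF n).trans FF_subset_Y), hm, Fim_bpt_singleton] at h2
  have h3 : bpt n ∈ closure (Hp m) := by
    apply h2
    rw [Set.mem_singleton_iff]
    exact hb.symm
  rw [closure_Hp m, arcH_eq] at h3
  exact cc_mem_Icc_cases h3.1

lemma f_bpt_succ {n : ℕ} (hb : ((f (bptY n) : ↥Y) : ℝ × ℝ) = bpt n)
    (hH : Fim f (Hp n) = Hp n) : ((f (bptY (n + 1)) : ↥Y) : ℝ × ℝ) = bpt (n + 1) := by
  have h1 : Fim f (arcH n \ Hp n) = arcH n \ Hp n := by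
    rw [Fim_diff, ← closure_Hp n, Fim_closure f ((Hp_subset_FF n).trans FF_subset_Y), hH]
  rw [arcH_diff_Hp] at h1
  rw [Fim_union, Fim_bpt_singleton, Fim_bpt_singleton] at h1
  have h3 : ((f (bptY (n + 1)) : ↥Y) : ℝ × ℝ) ∈ ({bpt (n + 1)} : Set (ℝ × ℝ)) ∪ {bpt n} := by
    rw [← h1]
    exact Or.inl rfl
  rcases h3 with h | h
  · exact h
  · exfalso
    have h4 : f (bptY (n + 1)) = bptY n := Subtype.ext h
    have h5 : f (bptY n) = bptY n := Subtype.ext hb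
    have h6 : bptY (n + 1) = bptY n := f.injective (by rw [h4, h5])
    have h7 : cc (n + 1) = cc n := congrArg (Prod.fst ∘ Subtype.val) h6
    exact absurd (cc_inj h7) (by omega)

lemma main_induction : ∀ n : ℕ,
    Fim f (Hp n) = Hp n ∧ ((f (bptY (n + 1)) : ↥Y) : ℝ × ℝ) = bpt (n + 1) := by
  intro n
  induction n with
  | zero =>
    have hb0 : ((f (bptY 0) : ↥Y) : ℝ × ℝ) = bpt 0 := congrArg Subtype.val (f_bpt0 f)
    obtain ⟨m, hm⟩ := Fim_Hp_piece f 0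
    have h1 : m = 0 := by
      rcases Hp_target f hb0 hm with h | h
      · exact h
      · omega
    subst h1
    exact ⟨hm, f_bpt_succ f hb0 hm⟩
  | succ n ih =>
    obtain ⟨ihH, ihb⟩ := ih
    obtain ⟨m, hm⟩ := Fim_Hp_piece f (n + 1)
    have h1 : m = n + 1 := by
      rcases Hp_target f ihb hm with h | h
      · exact h
      · exfalso
        have hmn : m = n := by omega
        rw [hmn] at hm
        have h2 : Hp (n + 1) = Hp n := by
          have h3 := congrArg (Fim f.symm) (hm.trans ihH.symm)
          rwa [Fim_symm_Fim f ((Hp_subset_FF (n + 1)).trans FF_subset_Y),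
            Fim_symm_Fim f ((Hp_subset_FF n).trans FF_subset_Y)] at h3
        obtain ⟨p, hp⟩ := Hp_nonempty (n + 1)
        have hpn : p ∈ Hp n := h2 ▸ hp
        have hd := Hp_disj (show n + 1 ≠ n by omega)
        rw [Set.eq_empty_iff_forall_notMem] at hd
        exact hd p ⟨hp, hpn⟩
    subst h1
    exact ⟨hm, f_bpt_succ f ihb hm⟩

lemma f_bpt (n : ℕ) : f (bptY n) = bptY n := by
  cases n with
  | zero => exact f_bpt0 f
  | succ n => exact Subtype.ext (main_induction f n).2

lemma Fim_Hp (n : ℕ) : Fim f (Hp n) = Hp n := (main_induction f n).1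

lemma Fim_Vp (n : ℕ) : Fim f (Vp n) = Vp n := by
  obtain ⟨j, hj⟩ := Fim_Pc f (Sum.inr (Sum.inl n))
  simp only [Pc] at hj
  have hsing : Fim f (Vp n ∩ Set.range ep) = {((f (epY n) : ↥Y) : ℝ × ℝ)} := by
    rw [Vp_inter_rangeEp, Fim_ep_singleton]
  rcases j with m | m | u
  · exfalso
    simp only [Pc] at hj
    have h1 : Fim f (Vp n ∩ Set.range ep) = Hp m ∩ Set.range ep := by
      rw [Fim_inter, hj, Fim_rangeEp]
    rw [Hp_inter_rangeEp, hsing] at h1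
    exact absurd h1 (Set.singleton_ne_empty _)
  · simp only [Pc] at hj
    have hmn : m = n := by
      have h1 : ({bpt n} : Set (ℝ × ℝ)) ⊆ closure (Vp n) := by
        rw [closure_Vp n, arcV_eq]
        intro q hq
        rw [Set.mem_singleton_iff] at hq
        rw [hq]
        exact ⟨rfl, le_refl _, (hh_pos n).le⟩
      have h2 := Fim_mono f h1
      rw [Fim_closure f ((Vp_subset_FF n).trans FF_subset_Y), hj, Fim_bpt_singleton] at h2
      have h3 : bpt n ∈ closure (Vp m) := by
        apply h2
        rw [Set.mem_singleton_iff]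
        exact (congrArg Subtype.val (f_bpt f n)).symm
      rw [closure_Vp m, arcV_eq] at h3
      exact (cc_inj h3.1).symm
    rw [hmn] at hj
    exact hj
  · exfalso
    simp only [Pc] at hj
    have h1 : Fim f (Vp n ∩ Set.range ep) = Cp ∩ Set.range ep := by
      rw [Fim_inter, hj, Fim_rangeEp]
    rw [Cp_inter_rangeEp, hsing] at h1
    exact absurd h1 (Set.singleton_ne_empty _)

lemma f_ep (n : ℕ) : f (epY n) = epY n := by
  have h1 : Fim f (Vp n ∩ Set.range ep) = Vp n ∩ Set.range ep := by
    rw [Fim_inter, Fim_Vp, Fim_rangeEp]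
  rw [Vp_inter_rangeEp, Fim_ep_singleton] at h1
  apply Subtype.ext
  have h2 : ((f (epY n) : ↥Y) : ℝ × ℝ) ∈ ({ep n} : Set (ℝ × ℝ)) := by
    rw [← h1]
    rfl
  exact h2

lemma Fim_arcV (n : ℕ) : Fim f (arcV n) = arcV n := by
  rw [← closure_Vp n, Fim_closure f ((Vp_subset_FF n).trans FF_subset_Y), Fim_Vp]

lemma Fim_arcH (n : ℕ) : Fim f (arcH n) = arcH n := by
  rw [← closure_Hp n, Fim_closure f ((Hp_subset_FF n).trans FF_subset_Y), Fim_Hp]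

lemma mem_iff_of_Fim {S : Set (ℝ × ℝ)} (hS : S ⊆ Y) (h : Fim f S = S) (x : ↥Y) :
    ((x : ℝ × ℝ) ∈ S) ↔ (((f x : ↥Y) : ℝ × ℝ) ∈ S) := by
  constructor
  · intro hx
    rw [← h]
    exact (mem_Fim f).2 ⟨x, hx, rfl⟩
  · intro hx
    have h1 : Fim f.symm S = S := by
      have h2 := Fim_symm_Fim f hS
      rwa [h] at h2
    rw [← h1]
    exact (mem_Fim f.symm).2 ⟨f x, hx, by rw [Homeomorph.symm_apply_apply]⟩

end Endgame

end

end Stmt13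






theorem stmt_13 (f : Y ≃ₜ Y) :
    (∀ n : ℕ, ∀ x : Y, (x : ℝ × ℝ) ∈ arcs n ↔ (f x : ℝ × ℝ) ∈ arcs n) ∧
    (∀ x : Y, (x : ℝ × ℝ) = (-1, 0) → f x = x) ∧
    (∀ x : Y, (x : ℝ × ℝ) = (1, 0) → f x = x) ∧
    (∀ n : ℕ, ∀ x : Y, (x : ℝ × ℝ) = (-1 + 2 / ((n : ℝ) + 1), 0) → f x = x) ∧
    (∀ n : ℕ, ∀ x : Y, (x : ℝ × ℝ) = (-1 + 2 / ((n : ℝ) + 1), 1 / ((n : ℝ) + 1)) → f x = x) := by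
  open Stmt13 in
  refine ⟨?_, ?_, ?_, ?_, ?_⟩
  · intro n x
    unfold arcs
    by_cases h0 : n = 0
    · rw [if_pos h0]
      exact Stmt13.mem_iff_of_Fim f Stmt13.arcC_subset_Y (Stmt13.Fim_arcC f) x
    · rw [if_neg h0]
      by_cases h1 : n % 2 = 1
      · rw [if_pos h1]
        exact Stmt13.mem_iff_of_Fim f (Stmt13.arcV_subset_Y _) (Stmt13.Fim_arcV f _) x
      · rw [if_neg h1]
        exact Stmt13.mem_iff_of_Fim f (Stmt13.arcH_subset_Y _) (Stmt13.Fim_arcH f _) x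
  · intro x hx
    have hxY : x = Stmt13.ppY := Subtype.ext hx
    rw [hxY, Stmt13.f_pp]
  · intro x hx
    have hxY : x = Stmt13.bptY 0 := Subtype.ext (by rw [hx]; exact Stmt13.bpt_zero.symm)
    rw [hxY, Stmt13.f_bpt f 0]
  · intro n x hx
    have hxY : x = Stmt13.bptY n := Subtype.ext hx
    rw [hxY, Stmt13.f_bpt f n]
  · intro n x hx
    have hxY : x = Stmt13.epY n := Subtype.ext hx
    rw [hxY, Stmt13.f_ep f n]
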